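/- arXiv:1811.10662 — 3 statements merged into one kernel-verified Lean document; each statement's English description precedes it below -/
import Mathlib

section
/- Let H : ℝⁿ → ℝ be a differentiable convex function, G : ℝⁿ → ℝ a convex function with G(u)/|u| → ∞ as |u| → ∞, and β, γ > 0 constants such that −β ≤ H(u) ≤ G(u) + γ for all u ∈ ℝⁿ. Then for any r > 1 and every u ∈ ℝⁿ, G⋆(∇H(u)) ≤ (1/(r−1))·G(r·u) + (r/(r−1))·(β + γ). -/
open scoped RealInnerProductSpace
open Filter

lemma grad_ineq {n : ℕ} (H : EuclideanSpace ℝ (Fin n) → ℝ)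
    (hH : ConvexOn ℝ Set.univ H) {u g : EuclideanSpace ℝ (Fin n)}
    (hg : HasGradientAt H g u) (w : EuclideanSpace ℝ (Fin n)) :
    ⟪g, w - u⟫ ≤ H w - H u := by
  set φ : ℝ → ℝ := fun t => H (u + t • (w - u)) with hφ
  have hconv : ConvexOn ℝ Set.univ φ := by
    have h2 := hH.comp_affineMap (AffineMap.lineMap u w)
    have heq : φ = H ∘ (AffineMap.lineMap u w) := by
      funext t
      simp [φ, AffineMap.lineMap_apply_module']
      rw [add_comm]
    rw [heq]
    simpa [Set.preimage_univ] using h2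
  have hline : HasDerivAt (fun t : ℝ => u + t • (w - u)) (w - u) 0 := by
    have h2 : HasDerivAt (fun t : ℝ => u + id t • (w - u)) (0 + (1:ℝ) • (w - u)) 0 :=
      (hasDerivAt_const (0:ℝ) u).add ((hasDerivAt_id (0:ℝ)).smul_const (w - u))
    simpa [id] using h2
  have hF : HasFDerivAt H (InnerProductSpace.toDual ℝ _ g) u := hg
  have hd : HasDerivAt φ ⟪g, w - u⟫ 0 := by
    have hF0 : HasFDerivAt H (InnerProductSpace.toDual ℝ _ g)
        (u + (0:ℝ) • (w - u)) := by simpa using hF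
    have := hF0.comp_hasDerivAt (x := (0:ℝ)) hline
    simp [InnerProductSpace.toDual_apply_apply] at this
    exact this
  have := hconv.le_slope_of_hasDerivAt (Set.mem_univ (0:ℝ)) (Set.mem_univ (1:ℝ))
    one_pos hd
  rw [slope_def_field] at this
  simpa [φ] using this

/-- If `H` is differentiable convex with gradient `h`, `G` is convex and
superlinear, and `-β ≤ H u ≤ G u + γ` with `β, γ > 0`, then for any `r > 1`,
`G⋆(h u) ≤ (1/(r-1)) G(r u) + (r/(r-1)) (β + γ)`. -/
theorem conj_grad_bound {n : ℕ}
    (H G Gs : EuclideanSpace ℝ (Fin n) → ℝ)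
    (h : EuclideanSpace ℝ (Fin n) → EuclideanSpace ℝ (Fin n))
    (β γ : ℝ) (hβ : 0 < β) (hγ : 0 < γ)
    (hH : ConvexOn ℝ Set.univ H)
    (hh : ∀ u, HasGradientAt H (h u) u)
    (hG : ConvexOn ℝ Set.univ G)
    (hsuper : Tendsto (fun u : EuclideanSpace ℝ (Fin n) => G u / ‖u‖) (cocompact _) atTop)
    (hGs : ∀ v, IsLUB {x : ℝ | ∃ u, x = ⟪u, v⟫ - G u} (Gs v))
    (hbound : ∀ u, -β ≤ H u ∧ H u ≤ G u + γ) :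
    ∀ (r : ℝ), 1 < r → ∀ u,
      Gs (h u) ≤ (r - 1)⁻¹ * G (r • u) + (r / (r - 1)) * (β + γ) := by
  intro r hr u
  have hr1 : 0 < r - 1 := by linarith
  -- step 1: Gs (h u) ≤ ⟪u, h u⟫ + (β + γ)
  have key : ∀ w, ⟪h u, w - u⟫ ≤ H w - H u := fun w => grad_ineq H hH (hh u) w
  have step1 : Gs (h u) ≤ ⟪u, h u⟫ + (β + γ) := by
    apply (hGs (h u)).2
    rintro x ⟨w, rfl⟩
    have h1 := key w
    have h2 := (hbound u).1
    have h3 := (hbound w).2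
    have hexp : ⟪h u, w - u⟫ = ⟪w, h u⟫ - ⟪u, h u⟫ := by
      rw [inner_sub_right, real_inner_comm]
      rw [real_inner_comm u (h u)]
    rw [hexp] at h1
    linarith
  -- step 2: ⟪u, h u⟫ ≤ (r-1)⁻¹ * (G (r • u) + β + γ)
  have step2 : ⟪u, h u⟫ ≤ (r - 1)⁻¹ * (G (r • u) + β + γ) := by
    have h1 := key (r • u)
    have h2 := (hbound u).1
    have h3 := (hbound (r • u)).2
    have hexp : ⟪h u, r • u - u⟫ = (r - 1) * ⟪u, h u⟫ := by
      rw [inner_sub_right, real_inner_smul_right, real_inner_comm]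
      ring
    rw [hexp] at h1
    rw [inv_mul_eq_div, le_div_iff₀ hr1, mul_comm]
    linarith
  calc Gs (h u) ≤ ⟪u, h u⟫ + (β + γ) := step1
    _ ≤ (r - 1)⁻¹ * (G (r • u) + β + γ) + (β + γ) := by linarith
    _ = (r - 1)⁻¹ * G (r • u) + (r / (r - 1)) * (β + γ) := by
        field_simp
        ring
end

section
/- Let G : ℝ^{2n} → [0,∞) be a semi-symplectic G-function, with constants K > 0, C ≥ 0 such that G⋆(Ju) ≤ G(Ku) + C for all u ∈ ℝ^{2n}. Then for every u in the Orlicz space L^G([0,T], ℝ^{2n}), the function Ju belongs to L^{G⋆}([0,T], ℝ^{2n}) and ‖Ju‖_{G⋆} ≤ K(C·T + 1)·‖u‖_G, where ‖·‖_G denotes the Luxemburg norm. -/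
open scoped RealInnerProductSpace
open Filter MeasureTheory

/-- If `G` is a semi-symplectic G-function on `ℝ²ⁿ = ℝⁿ × ℝⁿ`
(`G⋆(Ju) ≤ G(Ku) + C` with `K > 0`, `C ≥ 0`, `J(x,y) = (y,-x)`), then for every `u` in
the Orlicz space `L^G([0,T])` the function `Ju` belongs to `L^{G⋆}([0,T])` and its
Luxemburg norm satisfies `‖Ju‖_{G⋆} ≤ K (C T + 1) ‖u‖_G`. Membership in `L^G` means
that `∫₀ᵀ G(λ u) dt < ∞` for some `λ > 0`, and the Luxemburg norm is
`inf {c > 0 : ∫₀ᵀ G(u/c) dt ≤ 1}`. -/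
theorem semisymplectic_embedding {n : ℕ} (T : ℝ) (hT : 0 < T)
    (G Gs : EuclideanSpace ℝ (Fin n) × EuclideanSpace ℝ (Fin n) → ℝ)
    (hconv : ConvexOn ℝ Set.univ G)
    (hnonneg : ∀ u, 0 ≤ G u)
    (hzero : ∀ u, G u = 0 ↔ u = 0)
    (heven : ∀ u, G (-u) = G u)
    (hsuper : Tendsto
      (fun u : EuclideanSpace ℝ (Fin n) × EuclideanSpace ℝ (Fin n) => G u / ‖u‖)
      (cocompact _) atTop)
    (hGs : ∀ v, IsLUB {x : ℝ | ∃ u : EuclideanSpace ℝ (Fin n) × EuclideanSpace ℝ (Fin n),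
      x = ⟪u.1, v.1⟫ + ⟪u.2, v.2⟫ - G u} (Gs v))
    (K C : ℝ) (hK : 0 < K) (hC : 0 ≤ C)
    (hsemi : ∀ u : EuclideanSpace ℝ (Fin n) × EuclideanSpace ℝ (Fin n),
      Gs (u.2, -u.1) ≤ G (K • u) + C)
    (u : ℝ → EuclideanSpace ℝ (Fin n) × EuclideanSpace ℝ (Fin n))
    (hmeas : AEStronglyMeasurable u (volume.restrict (Set.Icc 0 T)))
    (hmem : ∃ lam : ℝ, 0 < lam ∧
      ∫⁻ t in Set.Icc (0:ℝ) T, ENNReal.ofReal (G (lam • u t)) < ⊤) :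
    (∃ lam : ℝ, 0 < lam ∧
      ∫⁻ t in Set.Icc (0:ℝ) T, ENNReal.ofReal (Gs (lam • ((u t).2, -(u t).1))) < ⊤) ∧
    sInf {c : ℝ | 0 < c ∧
        ∫⁻ t in Set.Icc (0:ℝ) T, ENNReal.ofReal (Gs (c⁻¹ • ((u t).2, -(u t).1))) ≤ 1} ≤
      K * (C * T + 1) *
        sInf {c : ℝ | 0 < c ∧
          ∫⁻ t in Set.Icc (0:ℝ) T, ENNReal.ofReal (G (c⁻¹ • u t)) ≤ 1} := by
  obtain ⟨lam, hlam, hfin⟩ := hmem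
  have hG0 : G 0 = 0 := (hzero 0).mpr rfl
  -- Gs(θ • v) ≤ θ * Gs v for θ ∈ [0,1]
  have hGsscale : ∀ θ : ℝ, 0 ≤ θ → θ ≤ 1 → ∀ v, Gs (θ • v) ≤ θ * Gs v := by
    intro θ hθ0 hθ1 v
    refine ((hGs (θ • v)).2 ?_ : Gs (θ • v) ≤ θ * Gs v)
    rintro x ⟨w, rfl⟩
    have h1 : ⟪w.1, v.1⟫ + ⟪w.2, v.2⟫ - G w ≤ Gs v := (hGs v).1 ⟨w, rfl⟩
    have h3 : ⟪w.1, (θ • v).1⟫ + ⟪w.2, (θ • v).2⟫ = θ * (⟪w.1, v.1⟫ + ⟪w.2, v.2⟫) := by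
      show ⟪w.1, θ • v.1⟫ + ⟪w.2, θ • v.2⟫ = _
      rw [real_inner_smul_right, real_inner_smul_right]; ring
    have h4 := mul_le_mul_of_nonneg_left h1 hθ0
    have h5 : 0 ≤ G w := hnonneg w
    rw [h3]; nlinarith
  -- G(θ • w) ≤ θ * G w for θ ∈ [0,1]
  have hGscale : ∀ θ : ℝ, 0 ≤ θ → θ ≤ 1 → ∀ w, G (θ • w) ≤ θ * G w := by
    intro θ hθ0 hθ1 w
    have := hconv.2 (Set.mem_univ w) (Set.mem_univ 0) hθ0 (by linarith : (0:ℝ) ≤ 1 - θ)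
      (by ring)
    simpa [hG0] using this
  -- rewriting J and scalars
  have hJsmul : ∀ (a : ℝ) (w : EuclideanSpace ℝ (Fin n) × EuclideanSpace ℝ (Fin n)),
      a • (w.2, -w.1) = ((a • w).2, -(a • w).1) := by
    intro a w
    rw [Prod.smul_mk, Prod.smul_snd, Prod.smul_fst, smul_neg]
  -- key pointwise bound: Gs(a • Jw) ≤ G((K*a) • w) + C
  have hkey : ∀ (a : ℝ) (w : EuclideanSpace ℝ (Fin n) × EuclideanSpace ℝ (Fin n)),
      Gs (a • (w.2, -w.1)) ≤ G ((K * a) • w) + C := by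
    intro a w
    rw [hJsmul a w]
    have := hsemi (a • w)
    rwa [smul_smul] at this
  have hIccT : volume (Set.Icc (0:ℝ) T) = ENNReal.ofReal T := by
    rw [Real.volume_Icc]; norm_num
  constructor
  · -- membership
    refine ⟨lam / K, by positivity, ?_⟩
    have hpt : ∀ t, ENNReal.ofReal (Gs ((lam / K) • ((u t).2, -(u t).1))) ≤
        ENNReal.ofReal (G (lam • u t)) + ENNReal.ofReal C := by
      intro t
      have h := hkey (lam / K) (u t)
      have hKa : K * (lam / K) = lam := by field_simp
      rw [hKa] at h
      calc ENNReal.ofReal (Gs ((lam / K) • ((u t).2, -(u t).1)))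
          ≤ ENNReal.ofReal (G (lam • u t) + C) := ENNReal.ofReal_le_ofReal h
        _ = ENNReal.ofReal (G (lam • u t)) + ENNReal.ofReal C :=
            ENNReal.ofReal_add (hnonneg _) hC
    calc ∫⁻ t in Set.Icc (0:ℝ) T, ENNReal.ofReal (Gs ((lam / K) • ((u t).2, -(u t).1)))
        ≤ ∫⁻ t in Set.Icc (0:ℝ) T,
            (ENNReal.ofReal (G (lam • u t)) + ENNReal.ofReal C) :=
          lintegral_mono fun t => hpt t
      _ = (∫⁻ t in Set.Icc (0:ℝ) T, ENNReal.ofReal (G (lam • u t))) +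
            ENNReal.ofReal C * volume (Set.Icc (0:ℝ) T) := by
          rw [lintegral_add_right _ measurable_const, lintegral_const,
            Measure.restrict_apply MeasurableSet.univ, Set.univ_inter]
      _ < ⊤ := by
          rw [hIccT]
          exact ENNReal.add_lt_top.mpr ⟨hfin, ENNReal.mul_lt_top
            ENNReal.ofReal_lt_top ENNReal.ofReal_lt_top⟩
  · -- norm inequality
    set SA := {c : ℝ | 0 < c ∧
      ∫⁻ t in Set.Icc (0:ℝ) T, ENNReal.ofReal (G (c⁻¹ • u t)) ≤ 1} with hSA
    set SB := {c : ℝ | 0 < c ∧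
      ∫⁻ t in Set.Icc (0:ℝ) T, ENNReal.ofReal (Gs (c⁻¹ • ((u t).2, -(u t).1))) ≤ 1}
      with hSB
    -- SA is nonempty
    set M := ∫⁻ t in Set.Icc (0:ℝ) T, ENNReal.ofReal (G (lam • u t)) with hM
    have hMne : M ≠ ⊤ := hfin.ne
    set θ₀ : ℝ := (M.toReal + 1)⁻¹ with hθ₀
    have hMt : 0 ≤ M.toReal := ENNReal.toReal_nonneg
    have hθ₀pos : 0 < θ₀ := by positivity
    have hθ₀le : θ₀ ≤ 1 := by
      rw [hθ₀]
      rw [inv_le_one_iff₀]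
      right; linarith
    have hc₀ : (θ₀ * lam)⁻¹ ∈ SA := by
      constructor
      · positivity
      · rw [inv_inv]
        have hpt : ∀ t, ENNReal.ofReal (G ((θ₀ * lam) • u t)) ≤
            ENNReal.ofReal θ₀ * ENNReal.ofReal (G (lam • u t)) := by
          intro t
          rw [← ENNReal.ofReal_mul hθ₀pos.le]
          refine ENNReal.ofReal_le_ofReal ?_
          have := hGscale θ₀ hθ₀pos.le hθ₀le (lam • u t)
          rwa [smul_smul] at this
        calc ∫⁻ t in Set.Icc (0:ℝ) T, ENNReal.ofReal (G ((θ₀ * lam) • u t))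
            ≤ ∫⁻ t in Set.Icc (0:ℝ) T,
                ENNReal.ofReal θ₀ * ENNReal.ofReal (G (lam • u t)) :=
              lintegral_mono fun t => hpt t
          _ = ENNReal.ofReal θ₀ * M := by
              rw [lintegral_const_mul' _ _ ENNReal.ofReal_ne_top]
          _ ≤ 1 := by
              rw [← ENNReal.ofReal_toReal hMne, ← ENNReal.ofReal_mul hθ₀pos.le,
                ← ENNReal.ofReal_one]
              refine ENNReal.ofReal_le_ofReal ?_
              rw [hθ₀, inv_mul_le_iff₀ (by linarith)]
              linarith
    have hSAne : SA.Nonempty := ⟨_, hc₀⟩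
    have hCT : (0:ℝ) ≤ C * T := mul_nonneg hC hT.le
    have hCT1 : (0:ℝ) < C * T + 1 := by linarith
    -- key: c ∈ SA → K*(C*T+1)*c ∈ SB
    have hpush : ∀ c ∈ SA, K * (C * T + 1) * c ∈ SB := by
      intro c hc
      obtain ⟨hcpos, hcint⟩ := hc
      have hdpos : 0 < K * (C * T + 1) * c := by positivity
      refine ⟨hdpos, ?_⟩
      set θ : ℝ := (C * T + 1)⁻¹ with hθ
      have hθpos : 0 < θ := by positivity
      have hθle : θ ≤ 1 := by
        rw [hθ, inv_le_one_iff₀]; right; linarith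
      have hdinv : (K * (C * T + 1) * c)⁻¹ = θ * (K * c)⁻¹ := by
        rw [hθ]; field_simp
      have hpt : ∀ t, ENNReal.ofReal (Gs ((K * (C * T + 1) * c)⁻¹ • ((u t).2, -(u t).1)))
          ≤ ENNReal.ofReal θ *
            (ENNReal.ofReal (G (c⁻¹ • u t)) + ENNReal.ofReal C) := by
        intro t
        have h1 : Gs ((K * (C * T + 1) * c)⁻¹ • ((u t).2, -(u t).1)) ≤
            θ * Gs ((K * c)⁻¹ • ((u t).2, -(u t).1)) := by
          rw [hdinv, ← smul_smul]
          exact hGsscale θ hθpos.le hθle _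
        have h2 : Gs ((K * c)⁻¹ • ((u t).2, -(u t).1)) ≤ G (c⁻¹ • u t) + C := by
          have h := hkey (K * c)⁻¹ (u t)
          have : K * (K * c)⁻¹ = c⁻¹ := by field_simp
          rwa [this] at h
        have h3 : Gs ((K * (C * T + 1) * c)⁻¹ • ((u t).2, -(u t).1)) ≤
            θ * (G (c⁻¹ • u t) + C) :=
          h1.trans (mul_le_mul_of_nonneg_left h2 hθpos.le)
        calc ENNReal.ofReal (Gs ((K * (C * T + 1) * c)⁻¹ • ((u t).2, -(u t).1)))
            ≤ ENNReal.ofReal (θ * (G (c⁻¹ • u t) + C)) := ENNReal.ofReal_le_ofReal h3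
          _ = ENNReal.ofReal θ *
              (ENNReal.ofReal (G (c⁻¹ • u t)) + ENNReal.ofReal C) := by
              rw [ENNReal.ofReal_mul hθpos.le,
                ENNReal.ofReal_add (hnonneg _) hC]
      calc ∫⁻ t in Set.Icc (0:ℝ) T,
            ENNReal.ofReal (Gs ((K * (C * T + 1) * c)⁻¹ • ((u t).2, -(u t).1)))
          ≤ ∫⁻ t in Set.Icc (0:ℝ) T, ENNReal.ofReal θ *
              (ENNReal.ofReal (G (c⁻¹ • u t)) + ENNReal.ofReal C) :=
            lintegral_mono fun t => hpt t
        _ = ENNReal.ofReal θ * ((∫⁻ t in Set.Icc (0:ℝ) T,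
              ENNReal.ofReal (G (c⁻¹ • u t))) +
              ENNReal.ofReal C * volume (Set.Icc (0:ℝ) T)) := by
            rw [lintegral_const_mul' _ _ ENNReal.ofReal_ne_top,
              lintegral_add_right _ measurable_const, lintegral_const,
              Measure.restrict_apply MeasurableSet.univ, Set.univ_inter]
        _ ≤ ENNReal.ofReal θ * (1 + ENNReal.ofReal C * ENNReal.ofReal T) := by
            rw [hIccT]
            exact mul_le_mul_right (add_le_add_left hcint _) _
        _ = 1 := by
            rw [← ENNReal.ofReal_mul hC, ← ENNReal.ofReal_one,
              ← ENNReal.ofReal_add (by norm_num) hCT,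
              ← ENNReal.ofReal_mul hθpos.le]
            congr 1
            rw [hθ]
            field_simp
            ring
      done
    have hbddB : BddBelow SB := ⟨0, fun x hx => hx.1.le⟩
    have hbd : ∀ c ∈ SA, (K * (C * T + 1))⁻¹ * sInf SB ≤ c := by
      intro c hc
      rw [inv_mul_le_iff₀ (by positivity)]
      calc sInf SB ≤ K * (C * T + 1) * c := csInf_le hbddB (hpush c hc)
        _ = K * (C * T + 1) * c := rfl
    have hfinal : (K * (C * T + 1))⁻¹ * sInf SB ≤ sInf SA := le_csInf hSAne hbd
    rw [inv_mul_le_iff₀ (by positivity)] at hfinal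
    calc sInf SB ≤ K * (C * T + 1) * sInf SA := hfinal
end

section
/- Let G : ℝ^{2n} → [0,∞) be a differentiable symplectic G-function, and define the Simonenko indices p(G) = inf_{u≠0} ⟨u, ∇G(u)⟩/G(u) and q(G) = sup_{u≠0} ⟨u, ∇G(u)⟩/G(u)}. Then p(G⋆) = p(G) and q(G⋆) = q(G). -/
open scoped RealInnerProductSpace
open Filter

/-- For a differentiable symplectic G-function `G` on `ℝ²ⁿ`
(with differentiable conjugate `Gs = G⋆`, `∇G⋆ = (∇G)⁻¹`, `G⋆(Ju) = G u`), the
Simonenko indices coincide: `p(G⋆) = p(G)` and `q(G⋆) = q(G)`, where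
`p(F) = inf_{u ≠ 0} ⟨u, ∇F(u)⟩/F(u)` and `q(F) = sup_{u ≠ 0} ⟨u, ∇F(u)⟩/F(u)`
(taken in the extended reals). Here `ℝ²ⁿ = ℝⁿ × ℝⁿ` with the ℓ² product inner
product, and `J(x,y) = (y,-x)`. -/
theorem simonenko_indices_conj {n : ℕ}
    (G Gs : WithLp 2 (EuclideanSpace ℝ (Fin n) × EuclideanSpace ℝ (Fin n)) → ℝ)
    (g gs : WithLp 2 (EuclideanSpace ℝ (Fin n) × EuclideanSpace ℝ (Fin n)) →
      WithLp 2 (EuclideanSpace ℝ (Fin n) × EuclideanSpace ℝ (Fin n)))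
    (J : WithLp 2 (EuclideanSpace ℝ (Fin n) × EuclideanSpace ℝ (Fin n)) →
      WithLp 2 (EuclideanSpace ℝ (Fin n) × EuclideanSpace ℝ (Fin n)))
    (hJ : ∀ u, J u = (WithLp.equiv 2 _).symm
      (((WithLp.equiv 2 _) u).2, -((WithLp.equiv 2 _) u).1))
    (hconv : ConvexOn ℝ Set.univ G)
    (hnonneg : ∀ u, 0 ≤ G u)
    (hzero : ∀ u, G u = 0 ↔ u = 0)
    (heven : ∀ u, G (-u) = G u)
    (hsuper : Tendsto
      (fun u : WithLp 2 (EuclideanSpace ℝ (Fin n) × EuclideanSpace ℝ (Fin n)) => G u / ‖u‖)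
      (cocompact _) atTop)
    (hGs : ∀ v, IsLUB {x : ℝ | ∃ u, x = ⟪u, v⟫ - G u} (Gs v))
    (hg : ∀ u, HasGradientAt G (g u) u)
    (hgs : ∀ v, HasGradientAt Gs (gs v) v)
    (hinv : ∀ u, gs (g u) = u ∧ g (gs u) = u)
    (hsymp : ∀ u, Gs (J u) = G u) :
    sInf {r : EReal | ∃ u, u ≠ 0 ∧ r = ((⟪u, g u⟫ / G u : ℝ) : EReal)} =
      sInf {r : EReal | ∃ v, v ≠ 0 ∧ r = ((⟪v, gs v⟫ / Gs v : ℝ) : EReal)} ∧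
    sSup {r : EReal | ∃ u, u ≠ 0 ∧ r = ((⟪u, g u⟫ / G u : ℝ) : EReal)} =
      sSup {r : EReal | ∃ v, v ≠ 0 ∧ r = ((⟪v, gs v⟫ / Gs v : ℝ) : EReal)} := by
  classical
  have hJJ : ∀ u, J (J u) = -u := by
    intro u
    rw [hJ, hJ]
    rfl
  have hJneg : ∀ u, J (-u) = -(J u) := by
    intro u
    rw [hJ, hJ]
    rfl
  have hJzero : J 0 = 0 := by
    have h := hJneg 0
    rw [neg_zero] at h
    have h2 : J 0 + J 0 = 0 := by nth_rewrite 2 [h]; exact add_neg_cancel _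
    have h3 : (2 : ℝ) • J 0 = 0 := by rw [two_smul]; exact h2
    simpa using (smul_eq_zero.mp h3).resolve_left (by norm_num)
  have hJ0 : ∀ u, u ≠ 0 → J u ≠ 0 := by
    intro u hu h0
    apply hu
    have h := hJJ u
    rw [h0, hJzero] at h
    simpa using h.symm
  have hinner : ∀ a b, ⟪J a, J b⟫ = ⟪a, b⟫ := by
    intro a b
    rw [hJ, hJ, WithLp.prod_inner_apply, WithLp.prod_inner_apply]
    simp [add_comm]
  have hadj : ∀ a b, ⟪a, J b⟫ = -⟪J a, b⟫ := by
    intro a b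
    rw [hJ, hJ, WithLp.prod_inner_apply, WithLp.prod_inner_apply]
    simp
  -- J as a continuous linear map
  let e := WithLp.prodContinuousLinearEquiv 2 ℝ (EuclideanSpace ℝ (Fin n)) (EuclideanSpace ℝ (Fin n))
  let Jclm : WithLp 2 (EuclideanSpace ℝ (Fin n) × EuclideanSpace ℝ (Fin n)) →L[ℝ]
      WithLp 2 (EuclideanSpace ℝ (Fin n) × EuclideanSpace ℝ (Fin n)) :=
    (e.symm.toContinuousLinearMap).comp
      (((ContinuousLinearMap.snd ℝ _ _).prod (-(ContinuousLinearMap.fst ℝ _ _))).comp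
        (e.toContinuousLinearMap))
  have hJclm : ∀ u, Jclm u = J u := by
    intro u
    rw [hJ]
    rfl
  -- the key chain-rule identity: gs (J u) = J (g u)
  have key : ∀ u, gs (J u) = J (g u) := by
    intro u
    have h1 : HasFDerivAt Gs (InnerProductSpace.toDual ℝ _ (gs (J u))) (Jclm u) := by
      rw [hJclm]; exact (hgs (J u))
    have h2 : HasFDerivAt (fun w => Gs (Jclm w))
        ((InnerProductSpace.toDual ℝ _ (gs (J u))).comp Jclm) u :=
      h1.comp u (Jclm.hasFDerivAt)
    have hGeq : (fun w => Gs (Jclm w)) = G := by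
      funext w; rw [hJclm, hsymp]
    rw [hGeq] at h2
    have h3 : HasFDerivAt G (InnerProductSpace.toDual ℝ _ (g u)) u := hg u
    have : ContinuousSMul ℝ (WithLp 2 (EuclideanSpace ℝ (Fin n) × EuclideanSpace ℝ (Fin n))) :=
      IsBoundedSMul.continuousSMul
    have h4 := h2.unique h3
    have h5 : g u = -(J (gs (J u))) := by
      apply ext_inner_right ℝ
      intro w
      have hw := congrFun (congrArg (fun (f : _ →L[ℝ] ℝ) => (f : _ → ℝ)) h4) w
      simp only [ContinuousLinearMap.comp_apply, InnerProductSpace.toDual_apply_apply] at hw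
      rw [hJclm] at hw
      rw [← hw, hadj, inner_neg_left]
    have h6 := congrArg J h5
    rw [hJneg, hJJ, neg_neg] at h6
    exact h6.symm
  -- the two sets coincide
  have hset : {r : EReal | ∃ u, u ≠ 0 ∧ r = ((⟪u, g u⟫ / G u : ℝ) : EReal)} =
      {r : EReal | ∃ v, v ≠ 0 ∧ r = ((⟪v, gs v⟫ / Gs v : ℝ) : EReal)} := by
    ext r
    constructor
    · rintro ⟨u, hu, rfl⟩
      refine ⟨J u, hJ0 u hu, ?_⟩
      rw [key, hinner, hsymp]
    · rintro ⟨v, hv, rfl⟩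
      have hJv : J (-(J v)) = v := by rw [hJneg, hJJ, neg_neg]
      refine ⟨-(J v), fun h => hJ0 v hv (neg_eq_zero.mp h), ?_⟩
      conv_lhs => rw [← hJv]
      rw [key, hinner, hsymp]
  rw [hset]
  exact ⟨rfl, rfl⟩
end
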